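/- Let X be a metric space. On the set of tight probability measures on X, the uniformity induced by the bounded-Lipschitz norm is finer than the Ub(X)-weak uniformity: for every bounded uniformly continuous f on X, the map μ ↦ ∫ f dμ is uniformly continuous with respect to the bounded-Lipschitz metric. -/

import Mathlib

open MeasureTheory

/-- The bounded-Lipschitz distance `‖μ − ν‖_d`. -/
noncomputable def blDist {X : Type*} [MetricSpace X] [MeasurableSpace X]
    (μ ν : Measure X) : ℝ :=
  ⨆ f : {f : X → ℝ // (∀ x, |f x| ≤ 1) ∧ LipschitzWith 1 f},
    (∫ x, f.1 x ∂μ - ∫ x, f.1 x ∂ν)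

lemma lip_approx {X : Type*} [MetricSpace X] [Nonempty X]
    (f : X → ℝ) (hf_uc : UniformContinuous f) (M : ℝ) (hf_bd : ∀ x, |f x| ≤ M)
    (ε : ℝ) (hε : 0 < ε) :
    ∃ (K : ℝ) (g : X → ℝ), 0 < K ∧ LipschitzWith (Real.toNNReal K) g ∧
      (∀ x, |g x| ≤ M) ∧ ∀ x, |f x - g x| ≤ ε := by
  obtain ⟨δ, hδ, hδf⟩ := Metric.uniformContinuous_iff.1 hf_uc ε hε
  have hM : 0 ≤ M := (abs_nonneg _).trans (hf_bd (Classical.arbitrary X))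
  set K : ℝ := (2 * M + 1) / δ with hK
  have hKpos : 0 < K := by positivity
  set g : X → ℝ := fun x => ⨅ y : X, f y + K * dist x y with hg
  have hB : ∀ x : X, BddBelow (Set.range fun y : X => f y + K * dist x y) := by
    intro x
    refine ⟨-M, ?_⟩
    rintro w ⟨y, rfl⟩
    dsimp only
    have := (abs_le.1 (hf_bd y)).1
    nlinarith [dist_nonneg (x := x) (y := y), mul_nonneg hKpos.le (dist_nonneg (x := x) (y := y))]
  have hgle : ∀ x, g x ≤ f x := by
    intro x
    have := ciInf_le (hB x) x
    simpa using this
  have hgge : ∀ x, f x - ε ≤ g x := by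
    intro x
    refine le_ciInf fun y => ?_
    rcases lt_or_ge (dist x y) δ with h | h
    · have := le_of_lt (hδf h)
      rw [Real.dist_eq] at this
      have := (abs_le.1 this).2
      nlinarith [dist_nonneg (x := x) (y := y), mul_nonneg hKpos.le (dist_nonneg (x := x) (y := y))]
    · have hKd : 2 * M + 1 ≤ K * dist x y := by
        rw [hK, div_mul_eq_mul_div, le_div_iff₀ hδ] at *
        nlinarith
      have h1 := (abs_le.1 (hf_bd x)).2
      have h2 := (abs_le.1 (hf_bd y)).1
      nlinarith
  have hgbd : ∀ x, |g x| ≤ M := by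
    intro x
    rw [abs_le]
    constructor
    · refine le_ciInf fun y => ?_
      have := (abs_le.1 (hf_bd y)).1
      nlinarith [dist_nonneg (x := x) (y := y), mul_nonneg hKpos.le (dist_nonneg (x := x) (y := y))]
    · exact (hgle x).trans ((abs_le.1 (hf_bd x)).2)
  refine ⟨K, g, hKpos, ?_, hgbd, fun x => ?_⟩
  · refine LipschitzWith.of_le_add_mul _ fun x y => ?_
    rw [← sub_le_iff_le_add]
    refine le_ciInf fun z => ?_
    rw [sub_le_iff_le_add]
    calc g x ≤ f z + K * dist x z := ciInf_le (hB x) z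
      _ ≤ f z + K * dist y z + (Real.toNNReal K) * dist x y := by
          have hc : Real.toNNReal K = (K : ℝ) := Real.coe_toNNReal K hKpos.le
          rw [hc]
          nlinarith [dist_triangle x y z, dist_nonneg (x := x) (y := y),
            dist_nonneg (x := y) (y := z)]
  · rw [abs_le]
    constructor
    · linarith [hgle x]
    · linarith [hgge x]


/-- the bounded-Lipschitz norm uniformity on tight probability measures is
finer than the `Ub(X)`-weak uniformity: for every bounded uniformly continuous `f`, the map
`μ ↦ ∫ f dμ` is uniformly continuous for the bounded-Lipschitz metric. -/
theorem blDist_finer_than_ubWeak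
    {X : Type*} [MetricSpace X] [MeasurableSpace X] [BorelSpace X]
    (f : X → ℝ) (hf_uc : UniformContinuous f) (M : ℝ) (hf_bd : ∀ x, |f x| ≤ M) :
    ∀ ε : ℝ, 0 < ε → ∃ δ : ℝ, 0 < δ ∧
      ∀ μ ν : Measure X, IsProbabilityMeasure μ → IsProbabilityMeasure ν →
        μ.InnerRegular → ν.InnerRegular →
        blDist μ ν < δ → |(∫ x, f x ∂μ) - ∫ x, f x ∂ν| < ε := by
  intro ε hε
  cases isEmpty_or_nonempty X with
  | inl h =>
    refine ⟨1, one_pos, fun μ ν _ _ _ _ _ => ?_⟩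
    simp [integral_of_isEmpty, hε]
  | inr h =>
    obtain ⟨K, g, hKpos, hglip, hgbd, hfg⟩ := lip_approx f hf_uc M hf_bd (ε/4) (by positivity)
    set C : ℝ := max K (max M 1) with hC
    have hC1 : 1 ≤ C := le_max_of_le_right (le_max_right _ _)
    have hCpos : 0 < C := lt_of_lt_of_le one_pos hC1
    have hKC : K ≤ C := le_max_left _ _
    have hMC : M ≤ C := le_max_of_le_right (le_max_left _ _)
    -- the test function
    set φ : X → ℝ := fun x => g x / C with hφ
    have hφbd : ∀ x, |φ x| ≤ 1 := by
      intro x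
      rw [hφ, abs_div, abs_of_pos hCpos, div_le_one hCpos]
      exact (hgbd x).trans hMC
    have hφlip : LipschitzWith 1 φ := by
      refine LipschitzWith.of_le_add_mul 1 fun x y => ?_
      have := hglip.le_add_mul (x := x) (y := y)
      rw [Real.coe_toNNReal K hKpos.le] at this
      have hd := dist_nonneg (x := x) (y := y)
      rw [hφ]
      simp only [NNReal.coe_one, one_mul]
      rw [div_add' _ _ _ hCpos.ne', div_le_div_iff₀ hCpos hCpos]
      nlinarith [mul_le_mul_of_nonneg_right this hCpos.le,
        mul_le_mul_of_nonneg_right (mul_le_mul_of_nonneg_right hKC hd) hCpos.le]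
    refine ⟨ε / (2 * C), by positivity, fun μ ν hμ hν _ _ hlt => ?_⟩
    -- integrability
    have hgc : Continuous g := hglip.continuous
    have hint : ∀ (ρ : Measure X), IsProbabilityMeasure ρ →
        Integrable f ρ ∧ Integrable g ρ := by
      intro ρ hρ
      constructor
      · exact ⟨hf_uc.continuous.aestronglyMeasurable,
          HasFiniteIntegral.of_bounded (C := M) (ae_of_all _ fun x => hf_bd x)⟩
      · exact ⟨hgc.aestronglyMeasurable,
          HasFiniteIntegral.of_bounded (C := M) (ae_of_all _ fun x => hgbd x)⟩
    obtain ⟨hfμ, hgμ⟩ := hint μ hμ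
    obtain ⟨hfν, hgν⟩ := hint ν hν
    -- bound on blDist sup terms
    have hBdd : BddAbove (Set.range fun (ψ : {ψ : X → ℝ // (∀ x, |ψ x| ≤ 1) ∧ LipschitzWith 1 ψ}) =>
        (∫ x, ψ.1 x ∂μ - ∫ x, ψ.1 x ∂ν)) := by
      refine ⟨2, ?_⟩
      rintro w ⟨⟨ψ, hψb, hψl⟩, rfl⟩
      have h1 : |∫ x, ψ x ∂μ| ≤ 1 := by
        have := norm_integral_le_of_norm_le_const (μ := μ) (f := ψ) (C := 1)
          (ae_of_all _ fun x => by simpa using hψb x)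
        simpa using this
      have h2 : |∫ x, ψ x ∂ν| ≤ 1 := by
        have := norm_integral_le_of_norm_le_const (μ := ν) (f := ψ) (C := 1)
          (ae_of_all _ fun x => by simpa using hψb x)
        simpa using this
      have := abs_le.1 h1
      have := abs_le.1 h2
      dsimp
      linarith [(abs_le.1 h1).2, (abs_le.1 h2).1]
    have key : ∀ (ψ : X → ℝ) (hb : ∀ x, |ψ x| ≤ 1) (hl : LipschitzWith 1 ψ),
        ∫ x, ψ x ∂μ - ∫ x, ψ x ∂ν ≤ blDist μ ν := by
      intro ψ hb hl
      exact le_ciSup hBdd ⟨ψ, hb, hl⟩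
    have hφneg : ∀ x, |(-φ) x| ≤ 1 := fun x => by simpa using hφbd x
    have habs : |∫ x, φ x ∂μ - ∫ x, φ x ∂ν| ≤ blDist μ ν := by
      rw [abs_le]
      constructor
      · have := key (-φ) hφneg hφlip.neg
        simp only [Pi.neg_apply, integral_neg] at this
        linarith
      · exact key φ hφbd hφlip
    -- relate ∫ φ to ∫ g
    have hφint : ∀ (ρ : Measure X), Integrable g ρ → ∫ x, φ x ∂ρ = (∫ x, g x ∂ρ) / C := by
      intro ρ _
      rw [hφ]
      exact integral_div C g
    rw [hφint μ hgμ, hφint ν hgν, div_sub_div_same, abs_div, abs_of_pos hCpos,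
      div_le_iff₀ hCpos] at habs
    have hg_bl : |∫ x, g x ∂μ - ∫ x, g x ∂ν| < ε / 2 := by
      calc |∫ x, g x ∂μ - ∫ x, g x ∂ν| ≤ blDist μ ν * C := habs
        _ < ε / (2 * C) * C := by exact mul_lt_mul_of_pos_right hlt hCpos
        _ = ε / 2 := by field_simp
    have hμd : |∫ x, f x ∂μ - ∫ x, g x ∂μ| ≤ ε / 4 := by
      rw [← integral_sub hfμ hgμ]
      have := norm_integral_le_of_norm_le_const (μ := μ) (f := fun x => f x - g x) (C := ε/4)
        (ae_of_all _ fun x => by simpa using hfg x)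
      simpa using this
    have hνd : |∫ x, f x ∂ν - ∫ x, g x ∂ν| ≤ ε / 4 := by
      rw [← integral_sub hfν hgν]
      have := norm_integral_le_of_norm_le_const (μ := ν) (f := fun x => f x - g x) (C := ε/4)
        (ae_of_all _ fun x => by simpa using hfg x)
      simpa using this
    calc |∫ x, f x ∂μ - ∫ x, f x ∂ν|
        ≤ |∫ x, f x ∂μ - ∫ x, g x ∂μ| + |∫ x, g x ∂μ - ∫ x, g x ∂ν|
          + |∫ x, g x ∂ν - ∫ x, f x ∂ν| := by
          have := abs_sub_le (∫ x, f x ∂μ) (∫ x, g x ∂μ) (∫ x, f x ∂ν)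
          have := abs_sub_le (∫ x, g x ∂μ) (∫ x, g x ∂ν) (∫ x, f x ∂ν)
          linarith
      _ < ε := by
          rw [abs_sub_comm (∫ x, g x ∂ν)]
          linarith
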